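/- Let λ > 0 and μ ≥ 0 be real numbers and let a < 0 be a real number satisfying −aλ < λ + μ. Then ∫_{0}^{∞} (1 − e^{aλx}) · e^{−(λ+μ)x}/(1 − e^{−x}) dx = −∑_{k=1}^{∞} (aλ)^{k} ∑_{m=0}^{∞} 1/(m + λ + μ)^{k+1}, where the double series on the right converges absolutely. -/

import Mathlib

open MeasureTheory Set Real

lemma aux_int_exp {s : ℝ} (hs : 0 < s) :
    ∫ x in Set.Ioi (0:ℝ), Real.exp (-(s * x)) = 1 / s := by
  have h := integral_comp_mul_left_Ioi (fun y => Real.exp (-y)) 0 hs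
  simp only [mul_zero] at h
  rw [show (fun x => Real.exp (-(s * x))) = (fun x => (fun y => Real.exp (-y)) (s * x)) from rfl]
  rw [h, integral_exp_neg_Ioi_zero, smul_eq_mul, mul_one, one_div]

lemma aux_integrable {s : ℝ} (hs : 0 < s) :
    IntegrableOn (fun x => Real.exp (-(s * x))) (Set.Ioi (0:ℝ)) := by
  simpa [neg_mul] using exp_neg_integrableOn_Ioi 0 hs

lemma aux_summable_sq {d : ℝ} (hd : 0 < d) :
    Summable (fun m : ℕ => 1 / ((m : ℝ) + d) ^ 2) := by
  have hbase : Summable (fun m : ℕ => 1 / ((m : ℝ) + 1) ^ 2) := by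
    have := (summable_nat_add_iff (f := fun n : ℕ => 1 / (n : ℝ) ^ 2) 1).2
      (summable_one_div_nat_pow.2 one_lt_two)
    simpa [Nat.cast_add] using this
  refine Summable.of_nonneg_of_le (fun m => by positivity) (fun m => ?_)
    (hbase.mul_left ((1 + 1 / d) ^ 2))
  have h2 : (0:ℝ) < (m : ℝ) + 1 := by positivity
  have key : (m : ℝ) + 1 ≤ (1 + 1 / d) * ((m : ℝ) + d) := by
    have hmd : 0 ≤ (m : ℝ) / d := by positivity
    have : (1 + 1 / d) * ((m : ℝ) + d) = (m : ℝ) + d + (m : ℝ) / d + 1 := by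
      field_simp; ring
    rw [this]; linarith [hd, hmd]
  have hk : ((m : ℝ) + 1) ^ 2 ≤ (1 + 1 / d) ^ 2 * ((m : ℝ) + d) ^ 2 := by
    rw [← mul_pow]; exact pow_le_pow_left₀ h2.le key 2
  rw [show (1 + 1 / d) ^ 2 * (1 / ((m : ℝ) + 1) ^ 2) = (1 + 1 / d) ^ 2 / ((m : ℝ) + 1) ^ 2 by ring,
    div_le_div_iff₀ (by positivity) (by positivity)]
  nlinarith [hk]

lemma aux_geom_tsum {r : ℝ} (hr : |r| < 1) :
    ∑' k : ℕ, r ^ (k + 1) = r * (1 - r)⁻¹ := by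
  have : ∀ k : ℕ, r ^ (k + 1) = r * r ^ k := fun k => by rw [pow_succ]; ring
  rw [tsum_congr this, tsum_mul_left, tsum_geometric_of_abs_lt_one hr]

lemma aux_geom_summable {r : ℝ} (hr : |r| < 1) :
    Summable (fun k : ℕ => r ^ (k + 1)) := by
  have : ∀ k : ℕ, r ^ (k + 1) = r * r ^ k := fun k => by rw [pow_succ]; ring
  exact (funext this : _) ▸ (summable_geometric_of_abs_lt_one hr).mul_left r

/-- Evaluation of the archimedean integral `I₁` as a double Hurwitz-zeta series. -/
theorem archimedean_integral_I1 (lam μ a : ℝ) (hlam : 0 < lam) (hμ : 0 ≤ μ)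
    (ha : a < 0) (h : -a * lam < lam + μ) :
    Summable (fun p : ℕ × ℕ =>
      |(a * lam) ^ (p.1 + 1) * (1 / ((p.2 : ℝ) + lam + μ) ^ (p.1 + 2))|) ∧
    ∫ x in Set.Ioi (0 : ℝ),
        (1 - Real.exp (a * lam * x)) * Real.exp (-(lam + μ) * x) / (1 - Real.exp (-x)) =
      -∑' k : ℕ, (a * lam) ^ (k + 1) * ∑' m : ℕ, 1 / ((m : ℝ) + lam + μ) ^ (k + 2) := by
  have hc0 : (0:ℝ) < lam + μ := by linarith
  set c : ℝ := lam + μ with hc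
  set b : ℝ := -(a * lam) with hbdef
  have hb0 : 0 < b := by
    have : a * lam < 0 := mul_neg_of_neg_of_pos ha hlam
    simp [hbdef]; linarith
  have hbc : b < c := by rw [hbdef, hc]; linarith [h]
  have hal : a * lam = -b := by rw [hbdef]; ring
  set s : ℕ → ℝ := fun m => (m : ℝ) + lam + μ with hsdef
  have hs0 : ∀ m, 0 < s m := by
    intro m; have := Nat.cast_nonneg (α := ℝ) m
    simp only [hsdef]; linarith
  have hsc : ∀ m, c ≤ s m := by
    intro m; have := Nat.cast_nonneg (α := ℝ) m
    simp only [hsdef, hc]; linarith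
  have hbs : ∀ m, b < s m := fun m => lt_of_lt_of_le hbc (hsc m)
  have hrlt : ∀ m, b / s m < 1 := fun m => (div_lt_one (hs0 m)).2 (hbs m)
  have hrabs : ∀ m, |a * lam / s m| < 1 := by
    intro m
    rw [hal, abs_div, abs_neg, abs_of_pos hb0, abs_of_pos (hs0 m)]
    exact hrlt m
  set t : ℕ → ℕ → ℝ := fun k m => (a * lam) ^ (k + 1) * (1 / s m ^ (k + 2)) with htdef
  have ht : ∀ k m, t k m = (a * lam / s m) ^ (k + 1) * (1 / s m) := by
    intro k m
    have hmne := (hs0 m).ne'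
    simp only [htdef, div_pow]
    field_simp
    try ring
    try exact Or.inl trivial
  have habs : ∀ k m, |t k m| = (b / s m) ^ (k + 1) * (1 / s m) := by
    intro k m
    rw [ht k m, abs_mul, abs_pow, abs_div, hal, abs_neg, abs_of_pos hb0,
      abs_of_pos (hs0 m), abs_of_pos (by positivity : (0:ℝ) < 1 / s m)]
  -- summability of the double series
  have hrow : ∀ m, Summable (fun k => |t k m|) := by
    intro m
    have := (aux_geom_summable (r := b / s m)
      (by rw [abs_of_pos (by positivity)]; exact hrlt m)).mul_right (1 / s m)
    exact this.congr fun k => (habs k m).symm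
  have hrowsum : ∀ m, ∑' k, |t k m| = b / (s m * (s m - b)) := by
    intro m
    rw [tsum_congr (fun k => habs k m), tsum_mul_right,
      aux_geom_tsum (by rw [abs_of_pos (by positivity)]; exact hrlt m)]
    have h1 : s m ≠ 0 := (hs0 m).ne'
    have h2 : s m - b ≠ 0 := by have := hbs m; intro hh; linarith [hh]
    field_simp
    try ring
    try exact Or.inl trivial
  have hcolsummable : Summable (fun m => ∑' k, |t k m|) := by
    have hcb : 0 < c - b := by linarith
    refine Summable.of_nonneg_of_le (fun m => tsum_nonneg fun k => abs_nonneg _)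
      (fun m => ?_) (((aux_summable_sq hcb).mul_left b).congr fun m => rfl)
    rw [hrowsum m]
    have h1 : 0 < s m := hs0 m
    have h2 : 0 < s m - b := by linarith [hbs m]
    have h3 : (0:ℝ) ≤ (m:ℝ) := Nat.cast_nonneg m
    have hsm : s m = (m : ℝ) + c := by simp [hsdef, hc]; ring
    have hsq : ((m : ℝ) + (c - b)) ^ 2 ≤ s m * (s m - b) := by
      rw [hsm]; nlinarith
    rw [show b * (1 / ((m:ℝ) + (c - b)) ^ 2) = b / ((m:ℝ) + (c - b)) ^ 2 by ring]
    apply div_le_div_of_nonneg_left hb0.le (by positivity) hsq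
  have hGswapped : Summable (fun q : ℕ × ℕ => |t q.2 q.1|) := by
    refine (summable_prod_of_nonneg (fun q => abs_nonneg _)).2 ⟨fun m => hrow m, ?_⟩
    exact hcolsummable
  have hpart1 : Summable (fun p : ℕ × ℕ => |t p.1 p.2|) := by
    have := (Equiv.prodComm ℕ ℕ).summable_iff.2 hGswapped
    exact this.congr fun p => rfl
  have hFt : Summable (fun p : ℕ × ℕ => t p.1 p.2) :=
    Summable.of_abs hpart1
  refine ⟨hpart1, ?_⟩
  -- the integral part
  set g : ℕ → ℝ → ℝ := fun m x => Real.exp (-(s m * x)) - Real.exp (-((s m + b) * x))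
    with hgdef
  have hsb0 : ∀ m, 0 < s m + b := fun m => by linarith [hs0 m, hb0]
  have hgint : ∀ m, IntegrableOn (g m) (Ioi 0) := fun m =>
    (aux_integrable (hs0 m)).sub (aux_integrable (hsb0 m))
  have hgval : ∀ m, ∫ x in Ioi (0:ℝ), g m x = 1 / s m - 1 / (s m + b) := by
    intro m
    simp only [hgdef]
    rw [integral_sub (aux_integrable (hs0 m)) (aux_integrable (hsb0 m)),
      aux_int_exp (hs0 m), aux_int_exp (hsb0 m)]
  have hpt : Set.EqOn
      (fun x => (1 - Real.exp (a * lam * x)) * Real.exp (-c * x) / (1 - Real.exp (-x)))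
      (fun x => ∑' m, g m x) (Ioi 0) := by
    intro x hx
    have hx0 : (0:ℝ) < x := hx
    have hex1 : Real.exp (-x) < 1 := exp_lt_one_iff.2 (by linarith)
    have hex0 : (0:ℝ) ≤ Real.exp (-x) := (Real.exp_pos _).le
    have hgeo : ∑' m : ℕ, Real.exp (-x) ^ m = (1 - Real.exp (-x))⁻¹ :=
      tsum_geometric_of_lt_one hex0 hex1
    simp only
    rw [div_eq_mul_inv, ← hgeo, ← tsum_mul_left]
    refine tsum_congr fun m => ?_
    have hxm : Real.exp (-x) ^ m = Real.exp (-((m:ℝ) * x)) := by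
      rw [← Real.exp_nat_mul]; congr 1; ring
    rw [hxm, hal]
    have h1 : Real.exp (-c * x) * Real.exp (-((m:ℝ) * x)) = Real.exp (-(s m * x)) := by
      rw [← Real.exp_add]; congr 1; simp only [hsdef, hc]; ring
    have h2 : Real.exp (-b * x) * (Real.exp (-c * x) * Real.exp (-((m:ℝ) * x)))
        = Real.exp (-((s m + b) * x)) := by
      rw [h1, ← Real.exp_add]; congr 1; ring
    calc (1 - Real.exp (-b * x)) * Real.exp (-c * x) * Real.exp (-((m:ℝ) * x))
        = Real.exp (-c * x) * Real.exp (-((m:ℝ) * x))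
          - Real.exp (-b * x) * (Real.exp (-c * x) * Real.exp (-((m:ℝ) * x))) := by ring
      _ = _ := by rw [h2, h1]
  have hmeas : ∀ m, AEStronglyMeasurable (g m) (volume.restrict (Ioi 0)) := by
    intro m
    apply Continuous.aestronglyMeasurable
    simp only [hgdef]
    fun_prop
  have hgnn : ∀ m, ∀ x ∈ Ioi (0:ℝ), 0 ≤ g m x := by
    intro m x hx
    have hx0 : (0:ℝ) < x := hx
    have hmono : Real.exp (-((s m + b) * x)) ≤ Real.exp (-(s m * x)) := by
      apply Real.exp_le_exp.2
      nlinarith [hs0 m, hb0]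
    simp only [hgdef]
    linarith
  have hI : ∀ m, (0:ℝ) ≤ 1 / s m - 1 / (s m + b) := by
    intro m
    have h1 := hs0 m; have h2 := hsb0 m
    have : 1 / (s m + b) ≤ 1 / s m := one_div_le_one_div_of_le h1 (by linarith)
    linarith
  have hsmc : ∀ m, s m = (m:ℝ) + c := by
    intro m; simp only [hsdef, hc]; ring
  have hIsummable : Summable (fun m => 1 / s m - 1 / (s m + b)) := by
    refine Summable.of_nonneg_of_le hI (fun m => ?_) ((aux_summable_sq hc0).mul_left b)
    have h1 := hs0 m; have h2 := hsb0 m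
    have heq : 1 / s m - 1 / (s m + b) = b / (s m * (s m + b)) := by
      field_simp
      try ring
      try exact Or.inl trivial
    rw [heq, show b * (1 / ((m:ℝ) + c) ^ 2) = b / ((m:ℝ) + c) ^ 2 by ring]
    apply div_le_div_of_nonneg_left hb0.le (by positivity)
    rw [hsmc m]
    nlinarith [Nat.cast_nonneg (α := ℝ) m, hb0, hc0]
  have hlint : ∀ m, (∫⁻ x in Ioi (0:ℝ), ‖g m x‖₊)
      = ENNReal.ofReal (1 / s m - 1 / (s m + b)) := by
    intro m
    have hae : 0 ≤ᵐ[volume.restrict (Ioi (0:ℝ))] g m :=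
      (ae_restrict_iff' measurableSet_Ioi).2 (ae_of_all _ (fun x hx => hgnn m x hx))
    rw [← hgval m, ofReal_integral_eq_lintegral_ofReal (hgint m) hae]
    apply lintegral_congr_ae
    filter_upwards [hae] with x hx
    rw [← enorm_eq_nnnorm, ← ofReal_norm, Real.norm_eq_abs, abs_of_nonneg hx]
  have hfin : (∑' m, ∫⁻ x in Ioi (0:ℝ), ‖g m x‖₊) ≠ ⊤ := by
    rw [tsum_congr hlint, ← ENNReal.ofReal_tsum_of_nonneg hI hIsummable]
    exact ENNReal.ofReal_ne_top
  have hint_eq : (∫ x in Ioi (0:ℝ),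
      (1 - Real.exp (a * lam * x)) * Real.exp (-c * x) / (1 - Real.exp (-x)))
      = ∑' m, (1 / s m - 1 / (s m + b)) := by
    rw [setIntegral_congr_fun measurableSet_Ioi hpt, integral_tsum hmeas hfin]
    exact tsum_congr hgval
  -- rewrite each term as a geometric series
  have hD : ∀ m, 1 / s m - 1 / (s m + b) = -∑' k, t k m := by
    intro m
    have hsumk : ∑' k, t k m = (a * lam / s m) ^ 1 * ((1 - a * lam / s m)⁻¹ * (1 / s m)) := by
      rw [tsum_congr (fun k => ht k m), tsum_mul_right, aux_geom_tsum (hrabs m)]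
      ring
    rw [hsumk, hal]
    have h1 : s m ≠ 0 := (hs0 m).ne'
    have h2 : s m + b ≠ 0 := (hsb0 m).ne'
    have h3 : (1 : ℝ) - -b / s m = (s m + b) / s m := by field_simp; ring
    rw [h3]
    rw [inv_div]
    field_simp
    ring
  have hswap : ∑' m, ∑' k, t k m = ∑' k, ∑' m, t k m := by
    refine Summable.tsum_comm' hFt (fun k => hFt.prod_factor k) (fun m => Summable.of_abs (hrow m))
  calc (∫ x in Ioi (0:ℝ),
      (1 - Real.exp (a * lam * x)) * Real.exp (-c * x) / (1 - Real.exp (-x)))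
      = ∑' m, (1 / s m - 1 / (s m + b)) := hint_eq
    _ = ∑' m, -∑' k, t k m := tsum_congr hD
    _ = -∑' m, ∑' k, t k m := by rw [tsum_neg]
    _ = -∑' k, ∑' m, t k m := by rw [hswap]
    _ = -∑' k : ℕ, (a * lam) ^ (k + 1) * ∑' m : ℕ, 1 / ((m : ℝ) + lam + μ) ^ (k + 2) := by
        congr 1
        refine tsum_congr fun k => ?_
        simp only [htdef, hsdef]
        exact tsum_mul_left
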